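/- Let n ≥ 3, let K ⊆ ℝⁿ be a proper subdual cone, let A ∈ ℝ^{n×n} be symmetric, and let {v¹, …, vⁿ} be an orthonormal system of eigenvectors of A with A vⁱ = λᵢ vⁱ and λ₁ < λ₂ ≤ ⋯ ≤ λₙ. Suppose v¹ ∈ int(K*) and there exists η > 0 such that ⟨v³, y⟩² + ⋯ + ⟨vⁿ, y⟩² ≤ η·⟨v¹, y⟩² for every y ∈ S^{n−1} ∩ K, and that λₙ ≤ λ₂ + (1/η)(λ₂ − λ₁). Then λ₂Iₙ − A is K-copositive, and consequently the sublevel set [φ_A ≤ c] = {x ∈ int(K) : ⟨Ax, x⟩ ≤ c‖x‖²} is convex for every c ∈ ℝ (i.e., q_A is spherically quasi-convex). -/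

import Mathlib

open scoped RealInnerProductSpace

/-- The quadratic form `x ↦ ⟨A x, x⟩` associated with a matrix `A`. -/
noncomputable def quadForm {n : ℕ} (A : Matrix (Fin n) (Fin n) ℝ)
    (x : EuclideanSpace ℝ (Fin n)) : ℝ :=
  ⟪Matrix.toEuclideanLin A x, x⟫

/-- `K` is a cone: closed under multiplication by positive scalars. -/
def IsCone {n : ℕ} (K : Set (EuclideanSpace ℝ (Fin n))) : Prop :=
  ∀ ⦃t : ℝ⦄, 0 < t → ∀ ⦃x⦄, x ∈ K → t • x ∈ K

/-- A proper cone: a pointed closed convex cone with nonempty interior. -/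
def IsProperCone {n : ℕ} (K : Set (EuclideanSpace ℝ (Fin n))) : Prop :=
  IsCone K ∧ Convex ℝ K ∧ IsClosed K ∧ K ∩ (-K) ⊆ {0} ∧ (interior K).Nonempty

/-- The dual cone `K* = {u : ⟨u, y⟩ ≥ 0 for all y ∈ K}`. -/
def dualCone {n : ℕ} (K : Set (EuclideanSpace ℝ (Fin n))) : Set (EuclideanSpace ℝ (Fin n)) :=
  {u | ∀ y ∈ K, 0 ≤ ⟪u, y⟫}

/-- The sublevel set `[φ_A ≤ c] = {x ∈ int K : ⟨A x, x⟩ ≤ c ‖x‖²}`. -/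
noncomputable def sublevel {n : ℕ} (A : Matrix (Fin n) (Fin n) ℝ)
    (K : Set (EuclideanSpace ℝ (Fin n))) (c : ℝ) : Set (EuclideanSpace ℝ (Fin n)) :=
  {x ∈ interior K | quadForm A x ≤ c * ‖x‖ ^ 2}

/-- Theorem 3 of the paper (case `δ = 1/η`): if `v¹ ∈ int K*`,
`∑_{i≥3} ⟨vⁱ, y⟩² ≤ η ⟨v¹, y⟩²` on `S^{n-1} ∩ K` with `η > 0`, and
`λₙ ≤ λ₂ + (1/η)(λ₂ - λ₁)`, then `λ₂Iₙ - A` is `K`-copositive and all sublevel sets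
`[φ_A ≤ c]` are convex (i.e. `q_A` is spherically quasi-convex). -/
theorem stmt16 (n : ℕ) [NeZero n] (hn : 3 ≤ n)
    (K : Set (EuclideanSpace ℝ (Fin n))) (hK : IsProperCone K) (hsub : K ⊆ dualCone K)
    (A : Matrix (Fin n) (Fin n) ℝ) (hA : A.IsSymm)
    (v : Fin n → EuclideanSpace ℝ (Fin n)) (hv : Orthonormal ℝ v)
    (lam : Fin n → ℝ) (heig : ∀ i, Matrix.toEuclideanLin A (v i) = lam i • v i)
    (hmono : Monotone lam) (h12 : lam 0 < lam 1)
    (hv1 : v 0 ∈ interior (dualCone K))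
    (η : ℝ) (hη : 0 < η)
    (hηb : ∀ y ∈ K, ‖y‖ = 1 →
      ∑ i ∈ (Finset.univ.erase 0).erase 1, ⟪v i, y⟫ ^ 2 ≤ η * ⟪v 0, y⟫ ^ 2)
    (hlam : lam ⟨n - 1, by omega⟩ ≤ lam 1 + (1 / η) * (lam 1 - lam 0)) :
    (∀ x ∈ K, 0 ≤ quadForm (lam 1 • (1 : Matrix (Fin n) (Fin n) ℝ) - A) x) ∧
      ∀ c : ℝ, Convex ℝ (sublevel A K c) := by
  -- Fin arithmetic facts
  have hval1 : ((1 : Fin n) : ℕ) = 1 := by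
    rw [Fin.val_one']; exact Nat.mod_eq_of_lt (by omega)
  have h10 : (1 : Fin n) ≠ 0 := by
    intro h3; have := congrArg Fin.val h3; rw [hval1] at this; simp at this
  have hle1 : ∀ i : Fin n, i ≠ 0 → (1 : Fin n) ≤ i := by
    intro i hi
    have h2 : (i : ℕ) ≠ 0 := fun h3 => hi (Fin.ext (by simp [h3]))
    rw [Fin.le_def, hval1]; omega
  have hlelast : ∀ i : Fin n, i ≤ (⟨n - 1, by omega⟩ : Fin n) := by
    intro i; rw [Fin.le_def]; have := i.isLt; simp; omega
  -- orthonormal basis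
  have hspan : ⊤ ≤ Submodule.span ℝ (Set.range v) :=
    (hv.linearIndependent.span_eq_top_of_card_eq_finrank
      (by simp [finrank_euclideanSpace])).ge
  let b : OrthonormalBasis (Fin n) ℝ (EuclideanSpace ℝ (Fin n)) := OrthonormalBasis.mk hv hspan
  have hb : ∀ i, b i = v i := fun i => by simp [b]
  have hinner : ∀ x y : EuclideanSpace ℝ (Fin n), ⟪x, y⟫ = ∑ i, ⟪v i, x⟫ * ⟪v i, y⟫ := by
    intro x y
    rw [← b.sum_inner_mul_inner x y]
    exact Finset.sum_congr rfl fun i _ => by rw [hb, real_inner_comm x (v i)]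
  have hnorm : ∀ x : EuclideanSpace ℝ (Fin n), ‖x‖ ^ 2 = ∑ i, ⟪v i, x⟫ ^ 2 := by
    intro x; rw [← real_inner_self_eq_norm_sq, hinner]
    exact Finset.sum_congr rfl fun i _ => (sq _).symm
  have hsymm : (Matrix.toEuclideanLin A).IsSymmetric := by
    rw [← Matrix.isHermitian_iff_isSymmetric, Matrix.IsHermitian, Matrix.conjTranspose]
    ext i j; simpa using hA.apply i j
  have hq : ∀ x, quadForm A x = ∑ i, lam i * ⟪v i, x⟫ ^ 2 := by
    intro x
    rw [quadForm, hinner]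
    refine Finset.sum_congr rfl fun i _ => ?_
    rw [show ⟪v i, Matrix.toEuclideanLin A x⟫ = ⟪Matrix.toEuclideanLin A (v i), x⟫ from
      (hsymm (v i) x).symm, heig, real_inner_smul_left]
    ring
  have hq1 : ∀ x, quadForm (lam 1 • (1 : Matrix (Fin n) (Fin n) ℝ) - A) x
      = ∑ i, (lam 1 - lam i) * ⟪v i, x⟫ ^ 2 := by
    intro x
    have h1 : Matrix.toEuclideanLin (1 : Matrix (Fin n) (Fin n) ℝ) x = x := by
      simp [Matrix.toEuclideanLin_eq_toLin]
    have e : quadForm (lam 1 • (1 : Matrix (Fin n) (Fin n) ℝ) - A) x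
        = lam 1 * ‖x‖ ^ 2 - quadForm A x := by
      simp only [quadForm, map_sub, map_smul, LinearMap.sub_apply, LinearMap.smul_apply, h1,
        inner_sub_left, real_inner_smul_left, real_inner_self_eq_norm_sq]
    rw [e, hq, hnorm, Finset.mul_sum, ← Finset.sum_sub_distrib]
    exact Finset.sum_congr rfl fun i _ => by ring
  -- Part 1: copositivity
  have hcop1 : ∀ y ∈ K, ‖y‖ = 1 → 0 ≤ ∑ i, (lam 1 - lam i) * ⟪v i, y⟫ ^ 2 := by
    intro y hy hy1
    have hbnd := hηb y hy hy1
    set d : Fin n → ℝ := fun i => ⟪v i, y⟫ with hd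
    set L : ℝ := lam ⟨n - 1, by omega⟩ with hL
    have h1mem : (1 : Fin n) ∈ Finset.univ.erase (0 : Fin n) :=
      Finset.mem_erase.mpr ⟨h10, Finset.mem_univ _⟩
    have hsplit : ∑ i, (lam 1 - lam i) * d i ^ 2
        = (lam 1 - lam 0) * d 0 ^ 2 + ((lam 1 - lam 1) * d 1 ^ 2
          + ∑ i ∈ (Finset.univ.erase 0).erase 1, (lam 1 - lam i) * d i ^ 2) := by
      rw [← Finset.add_sum_erase Finset.univ _ (Finset.mem_univ (0 : Fin n)),
        ← Finset.add_sum_erase _ _ h1mem]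
    have hstep1 : ∑ i ∈ (Finset.univ.erase 0).erase 1, (lam i - lam 1) * d i ^ 2
        ≤ (L - lam 1) * ∑ i ∈ (Finset.univ.erase 0).erase 1, d i ^ 2 := by
      rw [Finset.mul_sum]
      refine Finset.sum_le_sum fun i _ => ?_
      exact mul_le_mul_of_nonneg_right (by linarith [hmono (hlelast i)]) (sq_nonneg _)
    have h1L : lam 1 ≤ L := hmono (hlelast 1)
    have hstep2 : (L - lam 1) * ∑ i ∈ (Finset.univ.erase 0).erase 1, d i ^ 2
        ≤ (L - lam 1) * (η * d 0 ^ 2) :=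
      mul_le_mul_of_nonneg_left hbnd (by linarith)
    have hstep3 : (L - lam 1) * (η * d 0 ^ 2) ≤ (lam 1 - lam 0) * d 0 ^ 2 := by
      have h2 : L - lam 1 ≤ 1 / η * (lam 1 - lam 0) := by linarith
      calc (L - lam 1) * (η * d 0 ^ 2) ≤ 1 / η * (lam 1 - lam 0) * (η * d 0 ^ 2) :=
            mul_le_mul_of_nonneg_right h2 (by positivity)
        _ = (lam 1 - lam 0) * d 0 ^ 2 := by field_simp
    have hneg : ∑ i ∈ (Finset.univ.erase 0).erase 1, (lam 1 - lam i) * d i ^ 2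
        = -∑ i ∈ (Finset.univ.erase 0).erase 1, (lam i - lam 1) * d i ^ 2 := by
      rw [← Finset.sum_neg_distrib]
      exact Finset.sum_congr rfl fun i _ => by ring
    rw [hsplit, hneg]
    nlinarith [hstep1, hstep2, hstep3]
  have hcop : ∀ x ∈ K, 0 ≤ quadForm (lam 1 • (1 : Matrix (Fin n) (Fin n) ℝ) - A) x := by
    intro x hx
    rw [hq1]
    by_cases hx0 : x = 0
    · simp [hx0]
    · have hxn : 0 < ‖x‖ := norm_pos_iff.mpr hx0
      set y := ‖x‖⁻¹ • x with hy
      have hyK : y ∈ K := hK.1 (inv_pos.mpr hxn) hx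
      have hy1 : ‖y‖ = 1 := by
        rw [hy, norm_smul, norm_inv, norm_norm]; field_simp
      have hkey := hcop1 y hyK hy1
      have hrel : ∑ i, (lam 1 - lam i) * ⟪v i, x⟫ ^ 2
          = ‖x‖ ^ 2 * ∑ i, (lam 1 - lam i) * ⟪v i, y⟫ ^ 2 := by
        rw [Finset.mul_sum]
        refine Finset.sum_congr rfl fun i _ => ?_
        rw [hy, real_inner_smul_right]
        field_simp
      rw [hrel]
      positivity
  refine ⟨hcop, ?_⟩
  -- Part 2
  have hIc : Convex ℝ (interior K) := hK.2.1.interior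
  intro c
  rcases le_or_gt (lam 1) c with hc | hc
  · -- sublevel = interior K
    intro x hx y hy a bb ha hb hab
    refine ⟨hIc hx.1 hy.1 ha hb hab, ?_⟩
    set z := a • x + bb • y with hz
    have hzK : z ∈ K := interior_subset (hIc hx.1 hy.1 ha hb hab)
    have h1 := hcop z hzK
    rw [hq1] at h1
    have e : ∑ i, (lam 1 - lam i) * ⟪v i, z⟫ ^ 2 = lam 1 * ‖z‖ ^ 2 - quadForm A z := by
      rw [hq, hnorm, Finset.mul_sum, ← Finset.sum_sub_distrib]
      exact Finset.sum_congr rfl fun i _ => by ring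
    rw [e] at h1
    nlinarith [sq_nonneg ‖z‖, mul_le_mul_of_nonneg_right hc (sq_nonneg ‖z‖)]
  · -- c < lam 1
    have key : ∀ t : EuclideanSpace ℝ (Fin n),
        (quadForm A t ≤ c * ‖t‖ ^ 2 ↔ 0 ≤ ∑ i, (c - lam i) * ⟪v i, t⟫ ^ 2) := by
      intro t
      have e : ∑ i, (c - lam i) * ⟪v i, t⟫ ^ 2 = c * ‖t‖ ^ 2 - quadForm A t := by
        rw [hq, hnorm, Finset.mul_sum, ← Finset.sum_sub_distrib]
        exact Finset.sum_congr rfl fun i _ => by ring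
      rw [e]; exact sub_nonneg.symm
    have h0K : (0 : EuclideanSpace ℝ (Fin n)) ∉ interior K := by
      intro h0
      rcases Metric.isOpen_iff.1 isOpen_interior 0 h0 with ⟨ε, hε, hball⟩
      have hmem : ∀ t : EuclideanSpace ℝ (Fin n), ‖t‖ < ε → t ∈ K := fun t ht =>
        interior_subset (hball (by simpa [Metric.mem_ball, dist_zero_right] using ht))
      have hvnorm : ‖v 0‖ = 1 := hv.1 0
      have hwn : ‖(ε / 2) • v 0‖ < ε := by
        rw [norm_smul, hvnorm]; simp [abs_of_pos hε]; linarith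
      have hwK : (ε / 2) • v 0 ∈ K := hmem _ hwn
      have hwK' : (ε / 2) • v 0 ∈ -K := by
        rw [Set.mem_neg]
        have : ‖-((ε / 2) • v 0)‖ < ε := by rwa [norm_neg]
        exact hmem _ this
      have := hK.2.2.2.1 ⟨hwK, hwK'⟩
      simp only [Set.mem_singleton_iff] at this
      have : v 0 = 0 := by
        have hne : (ε / 2 : ℝ) ≠ 0 := by positivity
        exact (smul_eq_zero.mp this).resolve_left hne
      rw [this] at hvnorm; simp at hvnorm
    rcases lt_or_ge c (lam 0) with hc0 | hc0
    · -- sublevel is empty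
      intro x hx y hy a bb ha hb hab
      exfalso
      have hx0 : x ≠ 0 := fun h => h0K (h ▸ hx.1)
      have hxn : (0:ℝ) < ‖x‖ ^ 2 := pow_pos (norm_pos_iff.mpr hx0) 2
      have h1 := (key x).mp hx.2
      have h2 : ∑ i, (c - lam i) * ⟪v i, x⟫ ^ 2 ≤ (c - lam 0) * ∑ i, ⟪v i, x⟫ ^ 2 := by
        rw [Finset.mul_sum]
        refine Finset.sum_le_sum fun i _ => ?_
        exact mul_le_mul_of_nonneg_right (by linarith [hmono (Fin.zero_le i)]) (sq_nonneg _)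
      rw [← hnorm] at h2
      nlinarith
    · -- main case : lam 0 ≤ c < lam 1
      intro x hx y hy a bb ha hb hab
      refine ⟨hIc hx.1 hy.1 ha hb hab, ?_⟩
      rw [key]
      set u : Fin n → ℝ := fun i => ⟪v i, x⟫ with hu
      set w : Fin n → ℝ := fun i => ⟪v i, y⟫ with hw
      have hzc : ∀ i, ⟪v i, a • x + bb • y⟫ = a * u i + bb * w i := by
        intro i; rw [inner_add_right, real_inner_smul_right, real_inner_smul_right]
      have hv0dual : v 0 ∈ dualCone K := interior_subset hv1
      have hu0 : 0 ≤ u 0 := hv0dual x (interior_subset hx.1)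
      have hw0 : 0 ≤ w 0 := hv0dual y (interior_subset hy.1)
      have hμ : ∀ i ∈ Finset.univ.erase (0 : Fin n), 0 ≤ lam i - c := by
        intro i hi
        have := hmono (hle1 i (Finset.mem_erase.mp hi).1)
        linarith
      -- quadratic bounds from membership
      have hsplitx : ∀ t : Fin n → ℝ, ∑ i, (c - lam i) * t i ^ 2
          = (c - lam 0) * t 0 ^ 2 - ∑ i ∈ Finset.univ.erase 0, (lam i - c) * t i ^ 2 := by
        intro t
        rw [← Finset.add_sum_erase Finset.univ (fun i => (c - lam i) * t i ^ 2)
          (Finset.mem_univ (0 : Fin n))]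
        have : ∑ i ∈ Finset.univ.erase 0, (c - lam i) * t i ^ 2
            = -∑ i ∈ Finset.univ.erase 0, (lam i - c) * t i ^ 2 := by
          rw [← Finset.sum_neg_distrib]
          exact Finset.sum_congr rfl fun i _ => by ring
        rw [this]; ring
      have hx2 : ∑ i ∈ Finset.univ.erase 0, (lam i - c) * u i ^ 2 ≤ (c - lam 0) * u 0 ^ 2 := by
        have h1 := (key x).mp hx.2
        rw [hsplitx u] at h1; linarith
      have hy2 : ∑ i ∈ Finset.univ.erase 0, (lam i - c) * w i ^ 2 ≤ (c - lam 0) * w 0 ^ 2 := by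
        have h1 := (key y).mp hy.2
        rw [hsplitx w] at h1; linarith
      -- Cauchy-Schwarz (Aczél)
      have hcs := Finset.sum_mul_sq_le_sq_mul_sq (Finset.univ.erase (0 : Fin n))
        (fun i => Real.sqrt (lam i - c) * u i) (fun i => Real.sqrt (lam i - c) * w i)
      have e1 : ∑ i ∈ Finset.univ.erase (0 : Fin n),
          (Real.sqrt (lam i - c) * u i) * (Real.sqrt (lam i - c) * w i)
          = ∑ i ∈ Finset.univ.erase 0, (lam i - c) * (u i * w i) := by
        refine Finset.sum_congr rfl fun i hi => ?_
        rw [show (Real.sqrt (lam i - c) * u i) * (Real.sqrt (lam i - c) * w i)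
          = (Real.sqrt (lam i - c) * Real.sqrt (lam i - c)) * (u i * w i) by ring,
          Real.mul_self_sqrt (hμ i hi)]
      have e2 : ∑ i ∈ Finset.univ.erase (0 : Fin n), (Real.sqrt (lam i - c) * u i) ^ 2
          = ∑ i ∈ Finset.univ.erase 0, (lam i - c) * u i ^ 2 := by
        refine Finset.sum_congr rfl fun i hi => ?_
        rw [mul_pow, Real.sq_sqrt (hμ i hi)]
      have e3 : ∑ i ∈ Finset.univ.erase (0 : Fin n), (Real.sqrt (lam i - c) * w i) ^ 2
          = ∑ i ∈ Finset.univ.erase 0, (lam i - c) * w i ^ 2 := by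
        refine Finset.sum_congr rfl fun i hi => ?_
        rw [mul_pow, Real.sq_sqrt (hμ i hi)]
      rw [e1, e2, e3] at hcs
      have hPu0 : 0 ≤ ∑ i ∈ Finset.univ.erase (0 : Fin n), (lam i - c) * u i ^ 2 :=
        Finset.sum_nonneg fun i hi => mul_nonneg (hμ i hi) (sq_nonneg _)
      have hPw0 : 0 ≤ ∑ i ∈ Finset.univ.erase (0 : Fin n), (lam i - c) * w i ^ 2 :=
        Finset.sum_nonneg fun i hi => mul_nonneg (hμ i hi) (sq_nonneg _)
      have hα : 0 ≤ c - lam 0 := by linarith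
      have hprod : (∑ i ∈ Finset.univ.erase (0 : Fin n), (lam i - c) * u i ^ 2)
          * (∑ i ∈ Finset.univ.erase (0 : Fin n), (lam i - c) * w i ^ 2)
          ≤ ((c - lam 0) * u 0 ^ 2) * ((c - lam 0) * w 0 ^ 2) :=
        mul_le_mul hx2 hy2 hPw0 (by positivity)
      have htar : 0 ≤ (c - lam 0) * (u 0 * w 0) := mul_nonneg hα (mul_nonneg hu0 hw0)
      have hS : ∑ i ∈ Finset.univ.erase (0 : Fin n), (lam i - c) * (u i * w i)
          ≤ (c - lam 0) * (u 0 * w 0) := by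
        have hsq : (∑ i ∈ Finset.univ.erase (0 : Fin n), (lam i - c) * (u i * w i)) ^ 2
            ≤ ((c - lam 0) * (u 0 * w 0)) ^ 2 :=
          le_trans hcs (le_trans hprod (le_of_eq (by ring)))
        calc ∑ i ∈ Finset.univ.erase (0 : Fin n), (lam i - c) * (u i * w i)
            ≤ |∑ i ∈ Finset.univ.erase (0 : Fin n), (lam i - c) * (u i * w i)| := le_abs_self _
          _ ≤ |(c - lam 0) * (u 0 * w 0)| := by
              rw [← Real.sqrt_sq_eq_abs, ← Real.sqrt_sq_eq_abs]
              exact Real.sqrt_le_sqrt hsq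
          _ = (c - lam 0) * (u 0 * w 0) := abs_of_nonneg htar
      -- cross term nonneg
      have hScross : 0 ≤ ∑ i, (c - lam i) * (u i * w i) := by
        have hsplitc : ∑ i, (c - lam i) * (u i * w i)
            = (c - lam 0) * (u 0 * w 0)
              - ∑ i ∈ Finset.univ.erase 0, (lam i - c) * (u i * w i) := by
          rw [← Finset.add_sum_erase Finset.univ (fun i => (c - lam i) * (u i * w i))
            (Finset.mem_univ (0 : Fin n))]
          have : ∑ i ∈ Finset.univ.erase 0, (c - lam i) * (u i * w i)
              = -∑ i ∈ Finset.univ.erase 0, (lam i - c) * (u i * w i) := by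
            rw [← Finset.sum_neg_distrib]
            exact Finset.sum_congr rfl fun i _ => by ring
          rw [this]; ring
        rw [hsplitc]; linarith
      have hQx : 0 ≤ ∑ i, (c - lam i) * u i ^ 2 := (key x).mp hx.2
      have hQy : 0 ≤ ∑ i, (c - lam i) * w i ^ 2 := (key y).mp hy.2
      have hexp : ∑ i, (c - lam i) * ⟪v i, a • x + bb • y⟫ ^ 2
          = a ^ 2 * (∑ i, (c - lam i) * u i ^ 2) + bb ^ 2 * (∑ i, (c - lam i) * w i ^ 2)
            + 2 * a * bb * (∑ i, (c - lam i) * (u i * w i)) := by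
        rw [Finset.mul_sum, Finset.mul_sum, Finset.mul_sum, ← Finset.sum_add_distrib,
          ← Finset.sum_add_distrib]
        refine Finset.sum_congr rfl fun i _ => ?_
        rw [hzc i]; ring
      rw [hexp]
      have t1 : 0 ≤ a ^ 2 * (∑ i, (c - lam i) * u i ^ 2) := mul_nonneg (sq_nonneg _) hQx
      have t2 : 0 ≤ bb ^ 2 * (∑ i, (c - lam i) * w i ^ 2) := mul_nonneg (sq_nonneg _) hQy
      have t3 : 0 ≤ 2 * a * bb * (∑ i, (c - lam i) * (u i * w i)) :=
        mul_nonneg (mul_nonneg (mul_nonneg (by norm_num) ha) hb) hScross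
      linarith
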